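/- The functor from Gorenstein-projective Z[ε]-modules (A ⊕ B, [[0,0],[u,0]]) with u injective to the monomorphism category S(F), sending such a module to the embedding (Im u ⊆ B) and a morphism [[a,0],[c,b]] to the commutative square (a,b), is full, dense, and reflects isomorphisms (i.e., is an epivalence), but is not faithful in general. -/

import Mathlib

open CategoryTheory

/-- Gorenstein-projective `ℤ[ε]`-modules `(A ⊕ B, [[0,0],[u,0]])` with `u` injective:
objects are injective maps `u : ℤⁿ → ℤᵐ` of finitely generated free abelian groups. -/
structure GPObj where
  n : ℕ
  m : ℕ
  u : (Fin n → ℤ) →ₗ[ℤ] (Fin m → ℤ)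
  inj : Function.Injective u

/-- The monomorphism category `S(F)`: embeddings of a subgroup into a finitely
generated free abelian group. -/
structure SFObj where
  n : ℕ
  m : ℕ
  u : (Fin n → ℤ) →ₗ[ℤ] (Fin m → ℤ)
  inj : Function.Injective u

/-- Morphisms of `ℤ[ε]`-modules are lower triangular matrices `[[a,0],[c,b]]` with
`b ∘ u = u' ∘ a`. -/
instance : Category GPObj where
  Hom X Y := {t : ((Fin X.n → ℤ) →ₗ[ℤ] (Fin Y.n → ℤ)) ×
      ((Fin X.m → ℤ) →ₗ[ℤ] (Fin Y.m → ℤ)) ×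
      ((Fin X.n → ℤ) →ₗ[ℤ] (Fin Y.m → ℤ)) //
      t.2.1 ∘ₗ X.u = Y.u ∘ₗ t.1}
  id X := ⟨(LinearMap.id, LinearMap.id, 0), by simp⟩
  comp {X Y Z} f g := ⟨(g.1.1 ∘ₗ f.1.1, g.1.2.1 ∘ₗ f.1.2.1,
      g.1.2.2 ∘ₗ f.1.1 + g.1.2.1 ∘ₗ f.1.2.2), by
    apply LinearMap.ext; intro x
    have hf := LinearMap.congr_fun f.2 x
    have hg := LinearMap.congr_fun g.2 (f.1.1 x)
    simp only [LinearMap.comp_apply] at hf hg ⊢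
    rw [hf, hg]⟩
  id_comp f := Subtype.ext (by
    simp [Prod.ext_iff])
  comp_id f := Subtype.ext (by
    simp [Prod.ext_iff])
  assoc f g h := Subtype.ext (by
    simp [Prod.ext_iff, LinearMap.comp_assoc, LinearMap.comp_add, LinearMap.add_comp,
      add_assoc])

/-- Morphisms in `S(F)` are commutative squares `(a, b)` with `b ∘ u = u' ∘ a`. -/
instance : Category SFObj where
  Hom X Y := {t : ((Fin X.n → ℤ) →ₗ[ℤ] (Fin Y.n → ℤ)) ×
      ((Fin X.m → ℤ) →ₗ[ℤ] (Fin Y.m → ℤ)) //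
      t.2 ∘ₗ X.u = Y.u ∘ₗ t.1}
  id X := ⟨(LinearMap.id, LinearMap.id), by simp⟩
  comp {X Y Z} f g := ⟨(g.1.1 ∘ₗ f.1.1, g.1.2 ∘ₗ f.1.2), by
    apply LinearMap.ext; intro x
    have hf := LinearMap.congr_fun f.2 x
    have hg := LinearMap.congr_fun g.2 (f.1.1 x)
    simp only [LinearMap.comp_apply] at hf hg ⊢
    rw [hf, hg]⟩
  id_comp f := Subtype.ext (by simp [Prod.ext_iff])
  comp_id f := Subtype.ext (by simp [Prod.ext_iff])
  assoc f g h := Subtype.ext (by simp [Prod.ext_iff, LinearMap.comp_assoc])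

/-- The functor from Gorenstein-projective `ℤ[ε]`-modules to the monomorphism category
`S(F)`, sending `(A ⊕ B, [[0,0],[u,0]])` to the embedding `u : A → B` (i.e. to
`(Im u ⊆ B)`) and the morphism `[[a,0],[c,b]]` to the square `(a, b)`. -/
def pushDown : GPObj ⥤ SFObj where
  obj X := ⟨X.n, X.m, X.u, X.inj⟩
  map f := ⟨(f.1.1, f.1.2.1), f.2⟩
  map_id X := rfl
  map_comp f g := rfl

/-- The functor `G-proj ℤ[ε] → S(F)` is full, dense and reflects isomorphisms (an
epivalence), but it is not faithful. -/
theorem stmt11 :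
    pushDown.Full ∧ pushDown.EssSurj ∧ pushDown.ReflectsIsomorphisms ∧
      ¬ pushDown.Faithful := by
  refine ⟨⟨fun {X Y} g => ⟨⟨(g.1.1, g.1.2, 0), g.2⟩, rfl⟩⟩, ⟨fun X => ⟨⟨X.n, X.m, X.u, X.inj⟩, ⟨eqToIso rfl⟩⟩⟩, ⟨fun {X Y} f hf => ?_⟩, fun h => ?_⟩
  · set g := CategoryTheory.inv (pushDown.map f) with hgdef
    have h1 : pushDown.map f ≫ g = 𝟙 _ := IsIso.hom_inv_id _
    have h2 : g ≫ pushDown.map f = 𝟙 _ := IsIso.inv_hom_id _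
    have h1v := congrArg Subtype.val h1
    have h2v := congrArg Subtype.val h2
    have h1a : g.1.1 ∘ₗ f.1.1 = LinearMap.id := congrArg Prod.fst h1v
    have h1b : g.1.2 ∘ₗ f.1.2.1 = LinearMap.id := congrArg Prod.snd h1v
    have h2a : f.1.1 ∘ₗ g.1.1 = LinearMap.id := congrArg Prod.fst h2v
    have h2b : f.1.2.1 ∘ₗ g.1.2 = LinearMap.id := congrArg Prod.snd h2v
    refine ⟨⟨(⟨(g.1.1, g.1.2, -(g.1.2 ∘ₗ f.1.2.2 ∘ₗ g.1.1)), g.2⟩ : Y ⟶ X), ?_, ?_⟩⟩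
    · apply Subtype.ext
      refine Prod.ext h1a (Prod.ext h1b ?_)
      show (-(g.1.2 ∘ₗ f.1.2.2 ∘ₗ g.1.1)) ∘ₗ f.1.1 + g.1.2 ∘ₗ f.1.2.2 = 0
      erw [LinearMap.neg_comp, LinearMap.comp_assoc, LinearMap.comp_assoc, h1a,
        LinearMap.comp_id, neg_add_cancel]
    · apply Subtype.ext
      refine Prod.ext h2a (Prod.ext h2b ?_)
      show f.1.2.2 ∘ₗ g.1.1 + f.1.2.1 ∘ₗ (-(g.1.2 ∘ₗ f.1.2.2 ∘ₗ g.1.1)) = 0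
      erw [LinearMap.comp_neg, ← LinearMap.comp_assoc, h2b, LinearMap.id_comp,
        add_neg_cancel]
  · set X : GPObj := ⟨1, 1, LinearMap.id, fun a b hab => hab⟩ with hX
    have hc : (LinearMap.id : (Fin X.n → ℤ) →ₗ[ℤ] (Fin X.n → ℤ)) ∘ₗ X.u
        = X.u ∘ₗ LinearMap.id := rfl
    have hc0 : ((0 : (Fin X.m → ℤ) →ₗ[ℤ] (Fin X.m → ℤ))) ∘ₗ X.u
        = X.u ∘ₗ (0 : (Fin X.n → ℤ) →ₗ[ℤ] (Fin X.n → ℤ)) := by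
      apply LinearMap.ext; intro x; simp
    set f1 : X ⟶ X := ⟨(0, 0, 0), hc0⟩ with hf1
    set f2 : X ⟶ X := ⟨(0, 0, LinearMap.id), hc0⟩ with hf2
    have heq : f1 = f2 := h.map_injective rfl
    have := congrArg (fun t => t.1.2.2 (fun _ => (1 : ℤ))) heq
    simp only [hf1, hf2, LinearMap.zero_apply, LinearMap.id_apply] at this
    exact one_ne_zero (congrFun this.symm 0)
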